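/- arXiv:1412.8546 — 2 statements merged into one kernel-verified Lean document; each statement's English description precedes it below -/
import Mathlib

section
/- Let R be a binary relation on a set Con, and let μ, ν be finite-support probability distributions on Con. Then there exists a weight function for (μ, ν) with respect to R (i.e., a function δ : Con × Con → [0,1] with ∑_{D' ∈ supp(ν)} δ(C,D') = μ(C) for all C, ∑_{C' ∈ supp(μ)} δ(C',D) = ν(D) for all D, and δ(C,D) > 0 implies C R D) if and only if there exist an index set I, nonnegative reals {p_i}_{i∈I} summing to 1, and families {C_i}_{i∈I}, {D_i}_{i∈I} such that μ = ∑_{i∈I} p_i·δ_{C_i}, ν = ∑_{i∈I} p_i·δ_{D_i}, and C_i R D_i for each i ∈ I. -/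
/-- A finite-support probability distribution. -/
structure FDist (Con : Type*) where
  toFun : Con → ℝ
  nonneg : ∀ c, 0 ≤ toFun c
  finite : (Function.support toFun).Finite
  sum_one : ∑ᶠ c, toFun c = 1

/-- `δ` is a weight function for `(μ, ν)` w.r.t. the relation `R`. -/
def IsWeight {Con : Type*} (R : Con → Con → Prop) (μ ν : FDist Con)
    (δ : Con → Con → ℝ) : Prop :=
  (∀ c d, 0 ≤ δ c d ∧ δ c d ≤ 1) ∧
  (Function.support (Function.uncurry δ)).Finite ∧
  (∀ c, ∑ᶠ d, δ c d = μ.toFun c) ∧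
  (∀ d, ∑ᶠ c, δ c d = ν.toFun d) ∧
  (∀ c d, 0 < δ c d → R c d)

/-- The lifting of a relation to finite-support distributions via weight functions. -/
def Lift {Con : Type*} (R : Con → Con → Prop) (μ ν : FDist Con) : Prop :=
  ∃ δ, IsWeight R μ ν δ

theorem row_sum_aux {Con : Type*} [DecidableEq Con] (δ : Con → Con → ℝ)
    (hfin : (Function.support (Function.uncurry δ)).Finite)
    (f : Con → ℝ) (hf : ∀ c, ∑ᶠ d, δ c d = f c) (x : Con) :
    ∑ pair ∈ hfin.toFinset, (if pair.1 = x then δ pair.1 pair.2 else 0) = f x := by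
  classical
  set s := hfin.toFinset with hs
  have hmem : ∀ y : Con × Con, y ∈ s ↔ δ y.1 y.2 ≠ 0 := by
    intro y
    simp [hs, Function.mem_support, Function.uncurry]
  set A := s.image Prod.fst with hA
  set B := s.image Prod.snd with hB
  have hsub : s ⊆ A ×ˢ B := by
    intro y hy
    simp only [Finset.mem_product, hA, hB, Finset.mem_image]
    exact ⟨⟨y, hy, rfl⟩, ⟨y, hy, rfl⟩⟩
  have hrow : ∀ a : Con, ∑ b ∈ B, δ a b = f a := by
    intro a
    rw [← hf a]
    refine (finsum_eq_finset_sum_of_support_subset (fun b => δ a b) ?_).symm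
    intro b hb
    simp only [hB, Finset.coe_image, Set.mem_image, Finset.mem_coe]
    exact ⟨(a, b), (hmem _).2 hb, rfl⟩
  have h1 : ∑ pair ∈ s, (if pair.1 = x then δ pair.1 pair.2 else 0)
      = ∑ pair ∈ A ×ˢ B, (if pair.1 = x then δ pair.1 pair.2 else 0) := by
    refine Finset.sum_subset hsub ?_
    intro y _ hy
    have : δ y.1 y.2 = 0 := by
      by_contra hne; exact hy ((hmem y).2 hne)
    simp [this]
  rw [h1, Finset.sum_product]
  have h2 : ∀ a ∈ A, (∑ b ∈ B, if a = x then δ a b else 0)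
      = if a = x then f a else 0 := by
    intro a _
    by_cases hax : a = x
    · simp [hax, hrow x]
    · simp [hax]
  rw [Finset.sum_congr rfl h2, Finset.sum_ite_eq' A x f]
  by_cases hx : x ∈ A
  · simp [hx]
  · simp only [hx, if_false]
    rw [← hrow x]
    refine (Finset.sum_eq_zero ?_).symm
    intro b hb
    by_contra hne
    exact hx (Finset.mem_product.1 (hsub ((hmem (x, b)).2 hne))).1

theorem supp_fst_aux {Con : Type*} [DecidableEq Con] (δ : Con → Con → ℝ)
    (hfin : (Function.support (Function.uncurry δ)).Finite)
    (f : Con → ℝ) (hf : ∀ c, ∑ᶠ d, δ c d = f c) (x : Con)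
    (hx : x ∉ hfin.toFinset.image Prod.fst) : f x = 0 := by
  rw [← hf x]
  have : ∀ d, δ x d = 0 := by
    intro d
    by_contra hne
    refine hx (Finset.mem_image.2 ⟨(x, d), ?_, rfl⟩)
    simpa [Function.mem_support, Function.uncurry] using hne
  simp [this]

theorem total_sum_aux {Con : Type*} [DecidableEq Con] (δ : Con → Con → ℝ)
    (hfin : (Function.support (Function.uncurry δ)).Finite)
    (f : Con → ℝ) (hf : ∀ c, ∑ᶠ d, δ c d = f c) :
    ∑ pair ∈ hfin.toFinset, δ pair.1 pair.2 = ∑ᶠ c, f c := by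
  classical
  set s := hfin.toFinset with hs
  set A := s.image Prod.fst with hA
  have h1 : ∑ᶠ c, f c = ∑ x ∈ A, f x := by
    refine finsum_eq_finset_sum_of_support_subset f ?_
    intro x hx
    by_contra hxa
    exact hx (supp_fst_aux δ hfin f hf x hxa)
  rw [h1]
  have h2 : ∀ x ∈ A, f x = ∑ pair ∈ s, (if pair.1 = x then δ pair.1 pair.2 else 0) :=
    fun x _ => (row_sum_aux δ hfin f hf x).symm
  rw [Finset.sum_congr rfl h2, Finset.sum_comm]
  refine Finset.sum_congr rfl ?_
  intro y hy
  have hyA : y.1 ∈ A := Finset.mem_image.2 ⟨y, hy, rfl⟩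
  rw [Finset.sum_ite_eq A y.1 (fun _ => δ y.1 y.2)]
  simp [hyA]

theorem col_sum_aux {Con : Type*} [DecidableEq Con] (δ : Con → Con → ℝ)
    (hfin : (Function.support (Function.uncurry δ)).Finite)
    (g : Con → ℝ) (hg : ∀ d, ∑ᶠ c, δ c d = g d) (x : Con) :
    ∑ pair ∈ hfin.toFinset, (if pair.2 = x then δ pair.1 pair.2 else 0) = g x := by
  classical
  have hfin' : (Function.support (Function.uncurry (Function.swap δ))).Finite := by
    have : Function.uncurry (Function.swap δ) = (Function.uncurry δ) ∘ Prod.swap := by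
      funext y; rfl
    rw [this, Function.support_comp_eq_preimage]
    exact (hfin.preimage (Prod.swap_injective.injOn))
  have := row_sum_aux (Function.swap δ) hfin' g hg x
  rw [← this]
  refine Finset.sum_nbij' (fun y => y.swap) (fun y => y.swap) ?_ ?_ ?_ ?_ ?_
  · intro y hy
    simp only [Set.Finite.mem_toFinset, Function.mem_support] at hy ⊢
    exact hy
  · intro y hy
    simp only [Set.Finite.mem_toFinset, Function.mem_support] at hy ⊢
    exact hy
  · intro y _; exact Prod.swap_swap y
  · intro y _; exact Prod.swap_swap y
  · intro y _; rfl

/-- There is a weight function for `(μ, ν)` w.r.t. `R` iff `μ` and `ν` decompose as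
matching convex combinations of point distributions related pointwise by `R`. -/
theorem lift_iff_exists_decomposition {Con : Type*} [DecidableEq Con] (R : Con → Con → Prop)
    (μ ν : FDist Con) :
    Lift R μ ν ↔
      ∃ (n : ℕ) (p : Fin n → ℝ) (C D : Fin n → Con),
        (∀ i, 0 ≤ p i) ∧ (∑ i, p i = 1) ∧
        (∀ x, μ.toFun x = ∑ i, if C i = x then p i else 0) ∧
        (∀ x, ν.toFun x = ∑ i, if D i = x then p i else 0) ∧
        (∀ i, R (C i) (D i)) := by
  classical
  constructor
  · rintro ⟨δ, h01, hfin, hμ, hν, hR⟩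
    set s : Finset (Con × Con) := hfin.toFinset with hs
    have hmem : ∀ y : Con × Con, y ∈ s ↔ δ y.1 y.2 ≠ 0 := by
      intro y
      simp [hs, Function.mem_support, Function.uncurry]
    set n := s.card with hn
    set e := s.equivFin with he
    have key : ∀ g : Con × Con → ℝ,
        ∑ i : Fin n, g (e.symm i : Con × Con) = ∑ y ∈ s, g y := by
      intro g
      rw [← Finset.sum_coe_sort s g]
      exact Fintype.sum_equiv e.symm _ _ (fun i => rfl)
    refine ⟨n, fun i => δ (e.symm i : Con × Con).1 (e.symm i : Con × Con).2,
      fun i => (e.symm i : Con × Con).1, fun i => (e.symm i : Con × Con).2,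
      fun i => (h01 _ _).1, ?_, ?_, ?_, ?_⟩
    · rw [key (fun y => δ y.1 y.2), total_sum_aux δ hfin μ.toFun hμ, μ.sum_one]
    · intro x
      rw [key (fun y => if y.1 = x then δ y.1 y.2 else 0), row_sum_aux δ hfin μ.toFun hμ x]
    · intro x
      rw [key (fun y => if y.2 = x then δ y.1 y.2 else 0), col_sum_aux δ hfin ν.toFun hν x]
    · intro i
      refine hR _ _ (lt_of_le_of_ne (h01 _ _).1 (Ne.symm ?_))
      exact (hmem _).1 (e.symm i).2
  · rintro ⟨n, p, C, D, hp, hp1, hμ, hν, hCD⟩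
    refine ⟨fun c d => ∑ i : Fin n, if C i = c ∧ D i = d then p i else 0, ?_, ?_, ?_, ?_, ?_⟩
    · intro c d
      refine ⟨Finset.sum_nonneg fun i _ => ?_, ?_⟩
      · split
        exacts [hp i, le_rfl]
      · rw [← hp1]
        refine Finset.sum_le_sum fun i _ => ?_
        split
        exacts [le_rfl, hp i]
    · -- finite support
      refine Set.Finite.subset (Set.finite_range (fun i => (C i, D i))) ?_
      intro y hy
      simp only [Function.mem_support, Function.uncurry] at hy
      obtain ⟨i, _, hi⟩ := Finset.exists_ne_zero_of_sum_ne_zero hy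
      rcases (by by_contra h; simp [h] at hi : C i = y.1 ∧ D i = y.2) with ⟨h1, h2⟩
      exact ⟨i, by simp [h1, h2]⟩
    · intro c
      rw [hμ c]
      have hsupp : Function.support (fun d => ∑ i : Fin n, if C i = c ∧ D i = d then p i else 0)
          ⊆ ↑(Finset.image D Finset.univ) := by
        intro d hd
        simp only [Function.mem_support] at hd
        obtain ⟨i, _, hi⟩ := Finset.exists_ne_zero_of_sum_ne_zero hd
        rcases (by by_contra h; simp [h] at hi : C i = c ∧ D i = d) with ⟨_, h2⟩
        simp only [Finset.coe_image, Set.mem_image, Finset.mem_coe]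
        exact ⟨i, Finset.mem_univ i, h2⟩
      rw [finsum_eq_finset_sum_of_support_subset _ hsupp, Finset.sum_comm]
      refine Finset.sum_congr rfl ?_
      intro i _
      by_cases hc : C i = c
      · have hD : D i ∈ Finset.image D Finset.univ := Finset.mem_image_of_mem D (Finset.mem_univ i)
        simp only [hc, true_and]
        rw [Finset.sum_ite_eq (Finset.image D Finset.univ) (D i) (fun _ => p i)]
        simp [hD, hc]
      · simp [hc]
    · intro d
      rw [hν d]
      have hsupp : Function.support (fun c => ∑ i : Fin n, if C i = c ∧ D i = d then p i else 0)
          ⊆ ↑(Finset.image C Finset.univ) := by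
        intro c hc
        simp only [Function.mem_support] at hc
        obtain ⟨i, _, hi⟩ := Finset.exists_ne_zero_of_sum_ne_zero hc
        rcases (by by_contra h; simp [h] at hi : C i = c ∧ D i = d) with ⟨h1, _⟩
        simp only [Finset.coe_image, Set.mem_image, Finset.mem_coe]
        exact ⟨i, Finset.mem_univ i, h1⟩
      rw [finsum_eq_finset_sum_of_support_subset _ hsupp, Finset.sum_comm]
      refine Finset.sum_congr rfl ?_
      intro i _
      by_cases hd : D i = d
      · have hC : C i ∈ Finset.image C Finset.univ := Finset.mem_image_of_mem C (Finset.mem_univ i)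
        simp only [hd, and_true]
        rw [Finset.sum_ite_eq (Finset.image C Finset.univ) (C i) (fun _ => p i)]
        simp [hC, hd]
      · simp [hd]
    · intro c d hpos
      obtain ⟨i, _, hi⟩ := Finset.exists_ne_zero_of_sum_ne_zero (ne_of_gt hpos)
      rcases (by by_contra h; simp [h] at hi : C i = c ∧ D i = d) with ⟨h1, h2⟩
      rw [← h1, ← h2]
      exact hCD i
end

section
/- If R is transitive on a set Con, then the lifting of R to finite-support probability distributions via weight functions is transitive: if μ R̂ ν and ν R̂ ξ then μ R̂ ξ. -/
/-- The point (Dirac) distribution at `c`. -/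
noncomputable def pointDist {Con : Type*} [DecidableEq Con] (c : Con) : FDist Con where
  toFun x := if x = c then 1 else 0
  nonneg x := by split <;> norm_num
  finite := Set.Finite.subset (Set.finite_singleton c) (fun x hx => by
    by_contra h
    simp only [Function.mem_support] at hx
    simp only [Set.mem_singleton_iff] at h
    simp [h] at hx)
  sum_one := by
    rw [finsum_eq_single _ c]
    · simp
    · intro x hx; simp [hx]

/-- If `R` is transitive, its lifting via weight functions is transitive. -/
theorem lift_trans {Con : Type*} (R : Con → Con → Prop)
    (hR : ∀ a b c, R a b → R b c → R a c) (μ ν ξ : FDist Con)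
    (h1 : Lift R μ ν) (h2 : Lift R ν ξ) :
    Lift R μ ξ := by
  classical
  obtain ⟨δ, hb, hfin, hml, hmr, hrel⟩ := h1
  obtain ⟨δ', hb', hfin', hml', hmr', hrel'⟩ := h2
  set T : Finset (Con × Con) := hfin.toFinset with hT
  set T' : Finset (Con × Con) := hfin'.toFinset with hT'
  set D : Finset Con := T.image Prod.snd ∪ T'.image Prod.fst with hD
  -- support facts
  have hsδr : ∀ c, Function.support (δ c) ⊆ ↑(T.image Prod.snd) := by
    intro c d hd
    simp only [Finset.coe_image, Set.mem_image]
    exact ⟨(c, d), by simpa [hT, Set.Finite.mem_toFinset, Function.uncurry] using hd, rfl⟩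
  have hsδl : ∀ d, Function.support (fun c => δ c d) ⊆ ↑(T.image Prod.fst) := by
    intro d c hc
    simp only [Finset.coe_image, Set.mem_image]
    exact ⟨(c, d), by simpa [hT, Set.Finite.mem_toFinset, Function.uncurry] using hc, rfl⟩
  have hsδ'r : ∀ d, Function.support (δ' d) ⊆ ↑(T'.image Prod.snd) := by
    intro d e he
    simp only [Finset.coe_image, Set.mem_image]
    exact ⟨(d, e), by simpa [hT', Set.Finite.mem_toFinset, Function.uncurry] using he, rfl⟩
  have hsδ'l : ∀ e, Function.support (fun d => δ' d e) ⊆ ↑(T'.image Prod.fst) := by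
    intro e d hd
    simp only [Finset.coe_image, Set.mem_image]
    exact ⟨(d, e), by simpa [hT', Set.Finite.mem_toFinset, Function.uncurry] using hd, rfl⟩
  have hfδr : ∀ c, (Function.support (δ c)).Finite :=
    fun c => Set.Finite.subset (T.image Prod.snd).finite_toSet (hsδr c)
  have hfδl : ∀ d, (Function.support (fun c => δ c d)).Finite :=
    fun d => Set.Finite.subset (T.image Prod.fst).finite_toSet (hsδl d)
  have hfδ'r : ∀ d, (Function.support (δ' d)).Finite :=
    fun d => Set.Finite.subset (T'.image Prod.snd).finite_toSet (hsδ'r d)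
  have hfδ'l : ∀ e, (Function.support (fun d => δ' d e)).Finite :=
    fun e => Set.Finite.subset (T'.image Prod.fst).finite_toSet (hsδ'l e)
  -- bounds by ν
  have hδν : ∀ c d, δ c d ≤ ν.toFun d := by
    intro c d
    rw [← hmr d]
    exact single_le_finsum c (hfδl d) (fun c' => (hb c' d).1)
  have hδ'ν : ∀ d e, δ' d e ≤ ν.toFun d := by
    intro d e
    rw [← hml' d]
    exact single_le_finsum e (hfδ'r d) (fun e' => (hb' d e').1)
  have hν0 : ∀ c d, ν.toFun d = 0 → δ c d = 0 :=
    fun c d h0 => le_antisymm (h0 ▸ hδν c d) (hb c d).1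
  have hν0' : ∀ d e, ν.toFun d = 0 → δ' d e = 0 :=
    fun d e h0 => le_antisymm (h0 ▸ hδ'ν d e) (hb' d e).1
  set W : Con → Con → ℝ := fun c e => ∑ d ∈ D, δ c d * δ' d e / ν.toFun d with hW
  have hWnn : ∀ c e, 0 ≤ W c e := by
    intro c e
    apply Finset.sum_nonneg
    intro d _
    exact div_nonneg (mul_nonneg (hb c d).1 (hb' d e).1) (ν.nonneg d)
  -- if W c e ≠ 0 there is a witnessing d
  have hWwit : ∀ c e, W c e ≠ 0 → ∃ d, 0 < δ c d ∧ 0 < δ' d e := by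
    intro c e hne
    have hpos : 0 < W c e := lt_of_le_of_ne (hWnn c e) (Ne.symm hne)
    have : ∑ d ∈ D, (0 : ℝ) < ∑ d ∈ D, δ c d * δ' d e / ν.toFun d := by
      simpa [hW] using hpos
    obtain ⟨d, _, hd⟩ := Finset.exists_lt_of_sum_lt this
    refine ⟨d, ?_, ?_⟩
    · rcases eq_or_lt_of_le (hb c d).1 with h | h
      · exfalso; rw [← h] at hd; simp at hd
      · exact h
    · rcases eq_or_lt_of_le (hb' d e).1 with h | h
      · exfalso; rw [← h] at hd; simp at hd
      · exact h
  -- key: sums of δ c over D recover μ, etc.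
  have hDsub1 : (↑(T.image Prod.snd) : Set Con) ⊆ ↑D :=
    Finset.coe_subset.mpr Finset.subset_union_left
  have hDsub2 : (↑(T'.image Prod.fst) : Set Con) ⊆ ↑D :=
    Finset.coe_subset.mpr Finset.subset_union_right
  have hsumδ : ∀ c, ∑ d ∈ D, δ c d = μ.toFun c := by
    intro c
    rw [← hml c, finsum_eq_finset_sum_of_support_subset (δ c) ((hsδr c).trans hDsub1)]
  have hsumδ' : ∀ e, ∑ d ∈ D, δ' d e = ξ.toFun e := by
    intro e
    rw [← hmr' e,
      finsum_eq_finset_sum_of_support_subset (fun d => δ' d e) ((hsδ'l e).trans hDsub2)]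
  have hterm : ∀ c d, δ c d / ν.toFun d * ν.toFun d = δ c d := by
    intro c d
    by_cases h0 : ν.toFun d = 0
    · simp [h0, hν0 c d h0]
    · exact div_mul_cancel₀ _ h0
  have hterm' : ∀ d e, δ' d e / ν.toFun d * ν.toFun d = δ' d e := by
    intro d e
    by_cases h0 : ν.toFun d = 0
    · simp [h0, hν0' d e h0]
    · exact div_mul_cancel₀ _ h0
  refine ⟨W, ⟨?_, ?_, ?_, ?_, ?_⟩⟩
  · -- bounds
    intro c e
    refine ⟨hWnn c e, ?_⟩
    have h1 : W c e ≤ ∑ d ∈ D, δ c d := by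
      apply Finset.sum_le_sum
      intro d _
      have : δ c d * δ' d e / ν.toFun d ≤ δ c d * 1 := by
        rw [mul_div_assoc]
        apply mul_le_mul_of_nonneg_left _ (hb c d).1
        by_cases h0 : ν.toFun d = 0
        · simp [h0, hν0' d e h0]
        · exact (div_le_one (lt_of_le_of_ne (ν.nonneg d) (Ne.symm h0))).mpr (hδ'ν d e)
      simpa using this
    have h2 : μ.toFun c ≤ 1 := by
      rw [← μ.sum_one]
      exact single_le_finsum c μ.finite μ.nonneg
    calc W c e ≤ μ.toFun c := (hsumδ c) ▸ h1
      _ ≤ 1 := h2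
  · -- finite support
    apply Set.Finite.subset ((T.image Prod.fst ×ˢ T'.image Prod.snd).finite_toSet)
    rintro ⟨c, e⟩ hce
    obtain ⟨d, hd1, hd2⟩ := hWwit c e hce
    simp only [Finset.coe_product, Set.mem_prod, Finset.mem_coe]
    constructor
    · have := hsδl d (show (fun c' => δ c' d) c ≠ 0 from ne_of_gt hd1)
      simpa using this
    · have := hsδ'r d (show δ' d e ≠ 0 from ne_of_gt hd2)
      simpa using this
  · -- left marginal
    intro c
    have hsupp : Function.support (W c) ⊆ ↑(T'.image Prod.snd) := by
      intro e he
      obtain ⟨d, _, hd2⟩ := hWwit c e he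
      exact hsδ'r d (ne_of_gt hd2)
    rw [finsum_eq_finset_sum_of_support_subset (W c) hsupp]
    calc ∑ e ∈ T'.image Prod.snd, W c e
        = ∑ d ∈ D, ∑ e ∈ T'.image Prod.snd, δ c d * δ' d e / ν.toFun d :=
          Finset.sum_comm
      _ = ∑ d ∈ D, δ c d / ν.toFun d * ∑ e ∈ T'.image Prod.snd, δ' d e := by
          apply Finset.sum_congr rfl
          intro d _
          rw [Finset.mul_sum]
          apply Finset.sum_congr rfl
          intro e _
          ring
      _ = ∑ d ∈ D, δ c d / ν.toFun d * ν.toFun d := by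
          apply Finset.sum_congr rfl
          intro d _
          rw [← finsum_eq_finset_sum_of_support_subset (δ' d) (hsδ'r d), hml' d]
      _ = ∑ d ∈ D, δ c d := Finset.sum_congr rfl (fun d _ => hterm c d)
      _ = μ.toFun c := hsumδ c
  · -- right marginal
    intro e
    have hsupp : Function.support (fun c => W c e) ⊆ ↑(T.image Prod.fst) := by
      intro c hc
      obtain ⟨d, hd1, _⟩ := hWwit c e hc
      exact hsδl d (ne_of_gt hd1)
    rw [finsum_eq_finset_sum_of_support_subset (fun c => W c e) hsupp]
    calc ∑ c ∈ T.image Prod.fst, W c e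
        = ∑ d ∈ D, ∑ c ∈ T.image Prod.fst, δ c d * δ' d e / ν.toFun d :=
          Finset.sum_comm
      _ = ∑ d ∈ D, δ' d e / ν.toFun d * ∑ c ∈ T.image Prod.fst, δ c d := by
          apply Finset.sum_congr rfl
          intro d _
          rw [Finset.mul_sum]
          apply Finset.sum_congr rfl
          intro c _
          ring
      _ = ∑ d ∈ D, δ' d e / ν.toFun d * ν.toFun d := by
          apply Finset.sum_congr rfl
          intro d _
          rw [← finsum_eq_finset_sum_of_support_subset (fun c => δ c d) (hsδl d), hmr d]
      _ = ∑ d ∈ D, δ' d e := Finset.sum_congr rfl (fun d _ => hterm' d e)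
      _ = ξ.toFun e := hsumδ' e
  · -- relation
    intro c e hpos
    obtain ⟨d, hd1, hd2⟩ := hWwit c e (ne_of_gt hpos)
    exact hR c d e (hrel c d hd1) (hrel' d e hd2)
end
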